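/- Let φ be a faithful normal state and suppose h ∈ B_φ satisfies [φ^h] = φ (the perturbed state equals φ). Then h is a scalar: h = φ(h)·1. More generally, if [φ^h] = [φ^k] for h, k ∈ B_φ, then h − k = φ(h−k)·1. -/

import Mathlib

theorem perturbation_key_aux
    {B : Type*} [NormedAddCommGroup B] [NormedSpace ℝ B]
    (one : B) (ψ : B →L[ℝ] ℝ)
    (pert : (B →L[ℝ] ℝ) → B → (B →L[ℝ] ℝ))
    (c : (B →L[ℝ] ℝ) → B → ℝ)
    (hpert0 : pert ψ 0 = ψ)
    (hc0 : c ψ 0 = 0)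
    (hchain : ∀ h k : B,
      pert ψ (h + k) = pert (pert ψ h) k ∧ c ψ (h + k) = c (pert ψ h) k + c ψ h)
    (hscalar : ∀ h : B, ∀ l : ℝ, c ψ (h + l • one) = c ψ h + l)
    (hlower : ∀ h : B, ψ h ≤ c ψ h)
    (hconv : ConvexOn ℝ Set.univ (c ψ))
    (hsep : ∀ k : B, (∀ t : ℝ, c ψ (t • k) = 0) → k = 0)
    (g : B) (hg : pert ψ g = ψ) : g = ψ g • one := by
  set a := c ψ g with ha
  have htr : ∀ k : B, c ψ (g + k) = c ψ k + a := by
    intro k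
    have h2 := (hchain g k).2
    rw [hg] at h2
    exact h2
  have hpneg : pert ψ (-g) = ψ := by
    have h1 := (hchain g (-g)).1
    rw [hg, add_neg_cancel, hpert0] at h1
    exact h1.symm
  have hnega : c ψ (-g) = -a := by
    have := htr (-g)
    rw [add_neg_cancel, hc0] at this
    linarith
  have htr' : ∀ k : B, c ψ (-g + k) = c ψ k - a := by
    intro k
    have h2 := (hchain (-g) k).2
    rw [hpneg, hnega] at h2
    rw [h2]; ring
  -- integer translation
  have hint : ∀ n : ℤ, ∀ k : B, c ψ ((n : ℝ) • g + k) = c ψ k + n * a := by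
    intro n
    induction n using Int.induction_on with
    | zero => intro k; simp
    | succ n ih =>
        intro k
        have he : ((n + 1 : ℤ) : ℝ) • g + k = g + (((n : ℤ) : ℝ) • g + k) := by
          push_cast; module
        rw [he, htr, ih]; push_cast; ring
    | pred n ih =>
        intro k
        have he : ((-n - 1 : ℤ) : ℝ) • g + k = -g + (((-(n:ℤ)) : ℝ) • g + k) := by
          push_cast; module
        rw [he, htr']
        rw [show ((-(n:ℤ)):ℝ) = ((-n:ℤ):ℝ) by push_cast; ring, ih]
        push_cast; ring
  -- upper bound on [0,1)
  have hub01 : ∀ s : ℝ, 0 ≤ s → s ≤ 1 → c ψ (s • g) ≤ s * a := by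
    intro s hs0 hs1
    have := hconv.2 (Set.mem_univ (0 : B)) (Set.mem_univ g)
      (by linarith : (0:ℝ) ≤ 1 - s) hs0 (by ring)
    simpa [hc0, smul_zero, smul_eq_mul] using this
  -- upper bound everywhere
  have hub : ∀ t : ℝ, c ψ (t • g) ≤ t * a := by
    intro t
    have hfl : (0:ℝ) ≤ t - ⌊t⌋ := by
      have := Int.floor_le t; linarith
    have hfl1 : t - ⌊t⌋ ≤ 1 := by
      have := Int.lt_floor_add_one t; linarith
    have he : t • g = ((⌊t⌋ : ℝ)) • g + (t - ⌊t⌋) • g := by module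
    rw [he, hint]
    have := hub01 (t - ⌊t⌋) hfl hfl1
    linarith [this]
  -- lower bound everywhere
  have heq : ∀ t : ℝ, c ψ (t • g) = t * a := by
    intro t
    refine le_antisymm (hub t) ?_
    have hm : (0 : B) = (1/2 : ℝ) • (t • g) + (1/2 : ℝ) • ((-t) • g) := by module
    have := hconv.2 (Set.mem_univ (t • g)) (Set.mem_univ ((-t) • g))
      (by norm_num : (0:ℝ) ≤ 1/2) (by norm_num : (0:ℝ) ≤ 1/2) (by norm_num)
    rw [← hm, hc0] at this
    simp only [smul_eq_mul] at this
    have h2 := hub (-t)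
    linarith [this, h2]
  -- separation
  have hz : g - a • one = 0 := by
    apply hsep
    intro t
    have he : t • (g - a • one) = t • g + (-(t * a)) • one := by module
    rw [he, hscalar, heq]; ring
  have hgone : g = a • one := by
    have := sub_eq_zero.mp hz
    exact this
  -- ψ one = 1
  have hone : ψ one = 1 := by
    have h1 : c ψ one = 1 := by
      have := hscalar 0 1
      simpa [hc0] using this
    have h2 : c ψ (-one) = -1 := by
      have := hscalar 0 (-1)
      simpa [hc0] using this
    have l1 := hlower one
    have l2 := hlower (-one)
    rw [h1] at l1
    rw [h2, map_neg] at l2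
    linarith
  have : ψ g = a := by
    rw [hgone, map_smul, smul_eq_mul, hone]; ring
  rw [this, hgone]

/-- if the perturbed state satisfies `[φ^h] = φ` then `h = φ(h)·1`, and
more generally `[φ^h] = [φ^k]` implies `h − k = φ(h−k)·1`.  The Orlicz space `B_φ` is
modelled abstractly as a Banach space `B` with a distinguished unit `one`; `F` is the
set of faithful normal states (as functionals on `B`), `pert ψ h = [ψ^h]`, and
`c ψ h = c_ψ(h)`.  The chain rule, the scalar translation rule `c_ψ(h+λ1)=c_ψ(h)+λ`,
the bound `ψ(h) ≤ c_ψ(h)`, convexity of `c_ψ`, and the separation property of the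
Orlicz norm (`c_ψ(t k) = 0` for all `t` implies `k = 0`) are hypotheses. -/
theorem perturbation_injective
    {B : Type*} [NormedAddCommGroup B] [NormedSpace ℝ B]
    (one : B) (F : Set (B →L[ℝ] ℝ)) (φ : B →L[ℝ] ℝ) (hφF : φ ∈ F)
    (pert : (B →L[ℝ] ℝ) → B → (B →L[ℝ] ℝ))
    (c : (B →L[ℝ] ℝ) → B → ℝ)
    (hmem : ∀ ψ ∈ F, ∀ h : B, pert ψ h ∈ F)
    (hpert0 : ∀ ψ ∈ F, pert ψ 0 = ψ)
    (hc0 : ∀ ψ ∈ F, c ψ 0 = 0)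
    (hchain : ∀ ψ ∈ F, ∀ h k : B,
      pert ψ (h + k) = pert (pert ψ h) k ∧ c ψ (h + k) = c (pert ψ h) k + c ψ h)
    (hscalar : ∀ ψ ∈ F, ∀ h : B, ∀ l : ℝ, c ψ (h + l • one) = c ψ h + l)
    (hlower : ∀ ψ ∈ F, ∀ h : B, ψ h ≤ c ψ h)
    (hconv : ∀ ψ ∈ F, ConvexOn ℝ Set.univ (c ψ))
    (hsep : ∀ ψ ∈ F, ∀ k : B, (∀ t : ℝ, c ψ (t • k) = 0) → k = 0) :
    (∀ h : B, pert φ h = φ → h = φ h • one) ∧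
    (∀ h k : B, pert φ h = pert φ k → h - k = φ (h - k) • one) := by
  have key : ∀ ψ ∈ F, ∀ g : B, pert ψ g = ψ → g = ψ g • one := by
    intro ψ hψ g hg
    exact perturbation_key_aux one ψ pert c (hpert0 ψ hψ) (hc0 ψ hψ)
      (hchain ψ hψ) (hscalar ψ hψ) (hlower ψ hψ) (hconv ψ hψ) (hsep ψ hψ) g hg
  have onefun : ∀ ψ ∈ F, ψ one = 1 := by
    intro ψ hψ
    have h1 : c ψ one = 1 := by
      have := hscalar ψ hψ 0 1
      simpa [hc0 ψ hψ] using this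
    have h2 : c ψ (-one) = -1 := by
      have := hscalar ψ hψ 0 (-1)
      simpa [hc0 ψ hψ] using this
    have l1 := hlower ψ hψ one
    have l2 := hlower ψ hψ (-one)
    rw [h1] at l1
    rw [h2, map_neg] at l2
    linarith
  constructor
  · intro h hh
    exact key φ hφF h hh
  · intro h k hhk
    set ψ := pert φ k with hψdef
    have hψF : ψ ∈ F := hmem φ hφF k
    have hp : pert ψ (h - k) = ψ := by
      have h1 := (hchain φ hφF k (h - k)).1
      rw [show k + (h - k) = h by abel] at h1
      rw [← hψdef] at h1
      rw [← h1, hhk]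
    have hkey := key ψ hψF (h - k) hp
    -- h - k = ψ (h-k) • one ; rewrite via φ
    have hφone := onefun φ hφF
    rw [hkey, map_smul, smul_eq_mul, hφone, mul_one]
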